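/- Let (X,d,μ) be a metric measure space where μ is a Borel measure that is positive on nonempty open sets and finite on bounded sets. Let 1 ≤ p < q < ∞, set α = q/p, and let C_e > 0. Suppose that for every μ-measurable function u : X → ℝ and every nonnegative μ-measurable function g : X → ℝ with |u(x) − u(y)| ≤ d(x,y)(g(x) + g(y)) for μ-almost every x and y, one has (∫_X |u|^q dμ)^{1/q} ≤ C_e [(∫_X |u|^p dμ)^{1/p} + (∫_X g^p dμ)^{1/p}]. Then for every x ∈ X and every r ∈ (0,1], μ(B(x,r)) ≥ C r^{pα/(α−1)}, where the constant C is given explicitly by 1/C = 2^{pα²/(α−1)² + 3pα/(α−1)} · C_e^{pα/(α−1)}. -/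

import Mathlib

open MeasureTheory Metric ENNReal

lemma profile_lip (c t a b : ℝ) :
    |min c (max (t - a) 0) - min c (max (t - b) 0)| ≤ |a - b| := by
  have h1 := abs_min_sub_min_le_max c (max (t - a) 0) c (max (t - b) 0)
  have h2 := abs_max_sub_max_le_abs (t - a) (t - b) 0
  have h3 : |(t - a) - (t - b)| = |a - b| := by
    rw [show (t - a) - (t - b) = -(a - b) by ring, abs_neg]
  calc |min c (max (t - a) 0) - min c (max (t - b) 0)|
      ≤ max |c - c| |max (t - a) 0 - max (t - b) 0| := h1
    _ = |max (t - a) 0 - max (t - b) 0| := by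
        rw [sub_self, abs_zero]; exact max_eq_right (abs_nonneg _)
    _ ≤ |a - b| := h2.trans h3.le

lemma star_real {X : Type*} [MetricSpace X] [MeasurableSpace X] [BorelSpace X]
    (μ : Measure X)
    (hbounded : ∀ s : Set X, Bornology.IsBounded s → μ s < ∞)
    (p q : ℝ) (hp : 1 ≤ p) (hpq : p < q)
    (Ce : ℝ) (hCe : 0 < Ce)
    (hembed : ∀ u g : X → ℝ, AEMeasurable u μ → AEMeasurable g μ → (∀ y, 0 ≤ g y) →
      (∀ᵐ y ∂μ, ∀ᵐ z ∂μ, |u y - u z| ≤ dist y z * (g y + g z)) →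
      (∫⁻ y, ENNReal.ofReal |u y| ^ q ∂μ) ^ (1 / q) ≤
        ENNReal.ofReal Ce *
          ((∫⁻ y, ENNReal.ofReal |u y| ^ p ∂μ) ^ (1 / p) +
            (∫⁻ y, ENNReal.ofReal (g y) ^ p ∂μ) ^ (1 / p)))
    (x : X) (s t : ℝ) (hs : 0 < s) (hst : s < t) (ht : t ≤ 1) :
    (μ (ball x s)).toReal ≤ (2 * Ce / (t - s)) ^ q * ((μ (ball x t)).toReal) ^ (q / p) := by
  have hq0 : (0:ℝ) < q := lt_of_lt_of_le (lt_of_lt_of_le one_pos hp) hpq.le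
  have hp0 : (0:ℝ) < p := lt_of_lt_of_le one_pos hp
  have hts : (0:ℝ) < t - s := by linarith
  have hts1 : t - s ≤ 1 := by linarith
  set u : X → ℝ := fun y => min (t - s) (max (t - dist y x) 0) with hu_def
  set g : X → ℝ := (ball x t).indicator (fun _ => (1:ℝ)) with hg_def
  have hu_cont : Continuous u := by
    apply Continuous.min continuous_const
    exact Continuous.max (continuous_const.sub (continuous_id.dist continuous_const)) continuous_const
  have hu_meas : AEMeasurable u μ := hu_cont.aemeasurable
  have hg_meas : AEMeasurable g μ :=
    ((measurable_const.indicator measurableSet_ball).aemeasurable)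
  have hg_nonneg : ∀ y, 0 ≤ g y := fun y =>
    Set.indicator_nonneg (fun _ _ => zero_le_one) y
  -- u = 0 outside ball x t, u = t - s on ball x s, 0 ≤ u ≤ t - s
  have hu_zero : ∀ y, y ∉ ball x t → u y = 0 := by
    intro y hy
    have : t - dist y x ≤ 0 := by
      simp only [mem_ball] at hy; push_neg at hy; linarith
    simp only [hu_def]
    rw [max_eq_right this, min_eq_right hts.le]
  have hu_ball : ∀ y, y ∈ ball x s → u y = t - s := by
    intro y hy
    have h1 : dist y x < s := mem_ball.mp hy
    have h2 : t - s ≤ t - dist y x := by linarith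
    simp only [hu_def]
    exact min_eq_left (h2.trans (le_max_left _ _))
  have hu_nonneg : ∀ y, 0 ≤ u y := fun y => le_min hts.le (le_max_right _ _)
  have hu_le : ∀ y, u y ≤ t - s := fun y => min_le_left _ _
  have haj : ∀ y z : X, |u y - u z| ≤ dist y z * (g y + g z) := by
    intro y z
    by_cases h : y ∈ ball x t ∨ z ∈ ball x t
    · have hsum : 1 ≤ g y + g z := by
        rcases h with h | h
        · have hgy : g y = 1 := by simp only [hg_def]; rw [Set.indicator_of_mem h]
          have := hg_nonneg z; linarith
        · have hgz : g z = 1 := by simp only [hg_def]; rw [Set.indicator_of_mem h]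
          have := hg_nonneg y; linarith
      have hlip : |u y - u z| ≤ dist y z := by
        have hpl := profile_lip (t - s) t (dist y x) (dist z x)
        exact hpl.trans (abs_dist_sub_le y z x)
      calc |u y - u z| ≤ dist y z := hlip
        _ = dist y z * 1 := (mul_one _).symm
        _ ≤ dist y z * (g y + g z) := mul_le_mul_of_nonneg_left hsum dist_nonneg
    · push_neg at h
      rw [hu_zero y h.1, hu_zero z h.2, sub_zero, abs_zero]
      exact mul_nonneg dist_nonneg (add_nonneg (hg_nonneg y) (hg_nonneg z))
  have key := hembed u g hu_meas hg_meas hg_nonneg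
    (Filter.Eventually.of_forall fun y => Filter.Eventually.of_forall fun z => haj y z)
  have hA : (ENNReal.ofReal (t - s)) ^ q * μ (ball x s) ≤ ∫⁻ y, ENNReal.ofReal |u y| ^ q ∂μ := by
    have hpt : ∀ y, (ball x s).indicator (fun _ => (ENNReal.ofReal (t - s)) ^ q) y
        ≤ ENNReal.ofReal |u y| ^ q := by
      intro y
      by_cases hy : y ∈ ball x s
      · rw [Set.indicator_of_mem hy]
        have habs : |u y| = t - s := by rw [hu_ball y hy, abs_of_nonneg hts.le]
        rw [habs]
      · rw [Set.indicator_of_notMem hy]; exact zero_le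
    calc (ENNReal.ofReal (t - s)) ^ q * μ (ball x s)
        = ∫⁻ y, (ball x s).indicator (fun _ => (ENNReal.ofReal (t - s)) ^ q) y ∂μ := by
          rw [lintegral_indicator measurableSet_ball _, setLIntegral_const]
      _ ≤ _ := lintegral_mono hpt
  have hB : (∫⁻ y, ENNReal.ofReal |u y| ^ p ∂μ) ≤ (ENNReal.ofReal (t - s)) ^ p * μ (ball x t) := by
    have hpt : ∀ y, ENNReal.ofReal |u y| ^ p
        ≤ (ball x t).indicator (fun _ => (ENNReal.ofReal (t - s)) ^ p) y := by
      intro y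
      by_cases hy : y ∈ ball x t
      · rw [Set.indicator_of_mem hy]
        apply ENNReal.rpow_le_rpow _ hp0.le
        exact ENNReal.ofReal_le_ofReal (by rw [abs_of_nonneg (hu_nonneg y)]; exact hu_le y)
      · rw [Set.indicator_of_notMem hy, hu_zero y hy]
        simp only [abs_zero, ENNReal.ofReal_zero]
        rw [ENNReal.zero_rpow_of_pos hp0]
    calc (∫⁻ y, ENNReal.ofReal |u y| ^ p ∂μ)
        ≤ ∫⁻ y, (ball x t).indicator (fun _ => (ENNReal.ofReal (t - s)) ^ p) y ∂μ :=
          lintegral_mono hpt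
      _ = _ := by rw [lintegral_indicator measurableSet_ball _, setLIntegral_const]
  have hC : (∫⁻ y, ENNReal.ofReal (g y) ^ p ∂μ) = μ (ball x t) := by
    have hpt : ∀ y, ENNReal.ofReal (g y) ^ p = (ball x t).indicator (fun _ => (1:ℝ≥0∞)) y := by
      intro y
      by_cases hy : y ∈ ball x t
      · rw [Set.indicator_of_mem hy]
        simp only [hg_def]
        rw [Set.indicator_of_mem hy, ENNReal.ofReal_one, ENNReal.one_rpow]
      · rw [Set.indicator_of_notMem hy]
        simp only [hg_def]
        rw [Set.indicator_of_notMem hy, ENNReal.ofReal_zero, ENNReal.zero_rpow_of_pos hp0]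
    rw [lintegral_congr hpt, lintegral_indicator measurableSet_ball _, setLIntegral_const, one_mul]
  have hfin_t : μ (ball x t) ≠ ∞ := (hbounded _ isBounded_ball).ne
  have hmain : ENNReal.ofReal (t - s) * (μ (ball x s)) ^ (1/q)
      ≤ ENNReal.ofReal (2 * Ce) * (μ (ball x t)) ^ (1/p) := by
    have l1 : ENNReal.ofReal (t - s) * (μ (ball x s)) ^ (1/q)
        = ((ENNReal.ofReal (t - s)) ^ q * μ (ball x s)) ^ (1/q) := by
      rw [ENNReal.mul_rpow_of_nonneg _ _ (by positivity : (0:ℝ) ≤ 1/q), ← ENNReal.rpow_mul,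
          mul_one_div_cancel hq0.ne', ENNReal.rpow_one]
    have l2 : ((ENNReal.ofReal (t - s)) ^ p * μ (ball x t)) ^ (1/p)
        = ENNReal.ofReal (t - s) * (μ (ball x t)) ^ (1/p) := by
      rw [ENNReal.mul_rpow_of_nonneg _ _ (by positivity : (0:ℝ) ≤ 1/p), ← ENNReal.rpow_mul,
          mul_one_div_cancel hp0.ne', ENNReal.rpow_one]
    calc ENNReal.ofReal (t - s) * (μ (ball x s)) ^ (1/q)
        = ((ENNReal.ofReal (t - s)) ^ q * μ (ball x s)) ^ (1/q) := l1
      _ ≤ (∫⁻ y, ENNReal.ofReal |u y| ^ q ∂μ) ^ (1/q) :=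
          ENNReal.rpow_le_rpow hA (by positivity)
      _ ≤ ENNReal.ofReal Ce * ((∫⁻ y, ENNReal.ofReal |u y| ^ p ∂μ) ^ (1/p)
            + (∫⁻ y, ENNReal.ofReal (g y) ^ p ∂μ) ^ (1/p)) := key
      _ ≤ ENNReal.ofReal Ce * (((ENNReal.ofReal (t - s)) ^ p * μ (ball x t)) ^ (1/p)
            + (μ (ball x t)) ^ (1/p)) := by
          apply mul_le_mul_right
          apply add_le_add
          · exact ENNReal.rpow_le_rpow hB (by positivity)
          · rw [hC]
      _ = ENNReal.ofReal Ce * (ENNReal.ofReal (t - s) * (μ (ball x t)) ^ (1/p)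
            + (μ (ball x t)) ^ (1/p)) := by rw [l2]
      _ ≤ ENNReal.ofReal Ce * (1 * (μ (ball x t)) ^ (1/p) + (μ (ball x t)) ^ (1/p)) := by
          apply mul_le_mul_right
          apply add_le_add_left
          exact mul_le_mul_left (ENNReal.ofReal_le_one.mpr hts1) _
      _ = ENNReal.ofReal (2 * Ce) * (μ (ball x t)) ^ (1/p) := by
          rw [one_mul, ← two_mul, ENNReal.ofReal_mul (by norm_num : (0:ℝ) ≤ 2),
              ENNReal.ofReal_ofNat]
          ring
  have hrhs_fin : ENNReal.ofReal (2 * Ce) * (μ (ball x t)) ^ (1/p) ≠ ∞ :=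
    ENNReal.mul_ne_top ENNReal.ofReal_ne_top (ENNReal.rpow_ne_top_of_nonneg (by positivity) hfin_t)
  have main_r : (t - s) * ((μ (ball x s)).toReal) ^ (1/q)
      ≤ 2 * Ce * ((μ (ball x t)).toReal) ^ (1/p) := by
    have hm := ENNReal.toReal_mono hrhs_fin hmain
    rwa [ENNReal.toReal_mul, ENNReal.toReal_mul, ENNReal.toReal_ofReal hts.le,
        ENNReal.toReal_ofReal (by positivity : (0:ℝ) ≤ 2 * Ce),
        ← ENNReal.toReal_rpow, ← ENNReal.toReal_rpow] at hm
  set Fs := (μ (ball x s)).toReal with hFs_def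
  set Ft := (μ (ball x t)).toReal with hFt_def
  have hFs : 0 ≤ Fs := ENNReal.toReal_nonneg
  have hFt : 0 ≤ Ft := ENNReal.toReal_nonneg
  have h1 : Fs ^ (1/q) ≤ (2 * Ce / (t - s)) * Ft ^ (1/p) := by
    rw [div_mul_eq_mul_div, le_div_iff₀ hts]
    calc Fs ^ (1/q) * (t - s) = (t - s) * Fs ^ (1/q) := mul_comm _ _
      _ ≤ 2 * Ce * Ft ^ (1/p) := main_r
  have h2 : (Fs ^ (1/q)) ^ q ≤ ((2 * Ce / (t - s)) * Ft ^ (1/p)) ^ q :=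
    Real.rpow_le_rpow (by positivity) h1 hq0.le
  rw [← Real.rpow_mul hFs, one_div_mul_cancel hq0.ne', Real.rpow_one,
      Real.mul_rpow (by positivity) (by positivity), ← Real.rpow_mul hFt] at h2
  have hqp : 1/p * q = q / p := by ring
  rwa [hqp] at h2

lemma lemE (p q Ce : ℝ) (hp : 1 ≤ p) (hpq : p < q) (hCe : 0 < Ce)
    (F : ℝ → ℝ)
    (Fpos : ∀ t, 0 < t → 0 < F t)
    (Fmono : ∀ s t : ℝ, 0 < s → s ≤ t → F s ≤ F t)
    (hstar : ∀ s t : ℝ, 0 < s → s < t → t ≤ 1 →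
      F s ≤ (2 * Ce / (t - s)) ^ q * (F t) ^ (q / p)) :
    ∀ t₀ : ℝ, 0 < t₀ → t₀ ≤ 1 →
      (t₀ / (2 ^ ((p * q / (q - p)) / p) * 4 * Ce)) ^ (p * q / (q - p)) ≤ F t₀ := by
  intro t₀ ht₀ ht₀1
  have hp0 : (0:ℝ) < p := lt_of_lt_of_le one_pos hp
  have hq0 : (0:ℝ) < q := hp0.trans hpq
  have hqp : (0:ℝ) < q - p := by linarith
  set n : ℝ := p * q / (q - p) with hn_def
  have hn : 0 < n := by positivity
  set β : ℝ := n / p with hβ_def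
  by_contra hcon
  push_neg at hcon
  set c8 : ℝ := 2 ^ β * 4 * Ce with hc8
  have h2b : (0:ℝ) < 2 ^ β := Real.rpow_pos_of_pos two_pos β
  have hc8pos : 0 < c8 := by positivity
  set D : ℝ → ℝ := fun v => 2 ^ β * Ce * v ^ (1/n) with hD
  set T : ℕ → ℝ := fun i => Nat.rec t₀ (fun _ sprev => sprev - D (F sprev)) i with hT
  have hT0 : T 0 = t₀ := rfl
  have hTsucc : ∀ i, T (i+1) = T i - D (F (T i)) := fun i => rfl
  set d : ℝ := 2 ^ (-n) with hd_def
  have hd0 : 0 < d := Real.rpow_pos_of_pos two_pos _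
  have hd1 : d < 1 := Real.rpow_lt_one_of_one_lt_of_neg one_lt_two (neg_neg_of_pos hn)
  have hF0 : 0 < F t₀ := Fpos t₀ ht₀
  set δ₀ : ℝ := D (F t₀) with hδ₀_def
  have hδ₀pos : 0 < δ₀ :=
    mul_pos (mul_pos h2b hCe) (Real.rpow_pos_of_pos hF0 _)
  have hδ₀lt : δ₀ < t₀ / 4 := by
    have h1 : (F t₀) ^ (1/n) < t₀ / c8 := by
      have h2 := Real.rpow_lt_rpow hF0.le hcon (by positivity : (0:ℝ) < 1/n)
      rwa [← Real.rpow_mul (by positivity : (0:ℝ) ≤ t₀ / c8),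
        mul_one_div_cancel hn.ne', Real.rpow_one] at h2
    calc δ₀ = 2 ^ β * Ce * (F t₀) ^ (1/n) := rfl
      _ < 2 ^ β * Ce * (t₀ / c8) := by
          exact mul_lt_mul_of_pos_left h1 (mul_pos h2b hCe)
      _ = t₀ / 4 := by rw [hc8]; field_simp
  -- exponent identities
  have hid1 : (1 - β) * q = -n := by
    simp only [hβ_def, hn_def]
    field_simp
    ring
  have hid2 : (-(1/n)) * q + q / p = 1 := by
    simp only [hβ_def, hn_def]
    field_simp
    ring
  have hInd : ∀ i, T i ≤ t₀ ∧ t₀ - T i ≤ 2*δ₀*(1 - (1/2:ℝ)^i) ∧ F (T i) ≤ d^i * F t₀ := by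
    intro i
    induction i with
    | zero => exact ⟨hT0.le, by rw [hT0]; simp, by rw [hT0]; simp⟩
    | succ i ih =>
      obtain ⟨h1, h2, h3⟩ := ih
      have hhalf : (0:ℝ) < (1/2:ℝ)^i := by positivity
      have hhalf1 : (1/2:ℝ)^i ≤ 1 := pow_le_one₀ (by norm_num) (by norm_num)
      have hbnd : 2*δ₀*(1 - (1/2:ℝ)^i) ≤ 2*δ₀ := by
        have h5 := mul_le_mul_of_nonneg_left
          (by linarith : (1:ℝ) - (1/2:ℝ)^i ≤ 1) (by linarith : (0:ℝ) ≤ 2*δ₀)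
        linarith
      have hTi_lb : t₀ / 2 < T i := by linarith
      have hTi_pos : 0 < T i := by linarith
      have hFi : 0 < F (T i) := Fpos _ hTi_pos
      have hδi_pos : 0 < D (F (T i)) :=
        mul_pos (mul_pos h2b hCe) (Real.rpow_pos_of_pos hFi _)
      have hδi_le : D (F (T i)) ≤ (1/2:ℝ)^i * δ₀ := by
        have hFile : F (T i) ^ (1/n) ≤ (d^i * F t₀) ^ (1/n) :=
          Real.rpow_le_rpow hFi.le h3 (by positivity)
        have hdi : ((d:ℝ)^i) ^ (1/n) = (1/2:ℝ)^i := by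
          rw [hd_def, ← Real.rpow_natCast ((2:ℝ) ^ (-n)) i,
            ← Real.rpow_mul (by norm_num : (0:ℝ) ≤ 2),
            ← Real.rpow_mul (by norm_num : (0:ℝ) ≤ 2)]
          rw [show -n * (i:ℝ) * (1/n) = -(i:ℝ) by field_simp]
          rw [Real.rpow_neg (by norm_num : (0:ℝ) ≤ 2), Real.rpow_natCast, one_div, inv_pow]
        have hsplit : (d^i * F t₀) ^ (1/n) = (1/2:ℝ)^i * (F t₀)^(1/n) := by
          rw [Real.mul_rpow (by positivity) hF0.le, hdi]
        calc D (F (T i)) = 2 ^ β * Ce * F (T i) ^ (1/n) := rfl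
          _ ≤ 2 ^ β * Ce * ((1/2:ℝ)^i * (F t₀)^(1/n)) := by
              rw [← hsplit]
              exact mul_le_mul_of_nonneg_left hFile (mul_pos h2b hCe).le
          _ = (1/2:ℝ)^i * δ₀ := by rw [hδ₀_def, hD]; ring
      have hstep2 : t₀ - T (i+1) ≤ 2*δ₀*(1 - (1/2:ℝ)^(i+1)) := by
        rw [hTsucc]
        have e : t₀ - (T i - D (F (T i))) = (t₀ - T i) + D (F (T i)) := by ring
        rw [e]
        calc (t₀ - T i) + D (F (T i)) ≤ 2*δ₀*(1 - (1/2:ℝ)^i) + (1/2:ℝ)^i * δ₀ :=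
              add_le_add h2 hδi_le
          _ = 2*δ₀*(1 - (1/2:ℝ)^(i+1)) := by rw [pow_succ]; ring
      have hTip_pos : 0 < T (i+1) := by
        have hh : (0:ℝ) < (1/2:ℝ)^(i+1) := by positivity
        have hbnd2 : 2*δ₀*(1 - (1/2:ℝ)^(i+1)) ≤ 2*δ₀ := by
          have h5 := mul_le_mul_of_nonneg_left
            (by linarith : (1:ℝ) - (1/2:ℝ)^(i+1) ≤ 1) (by linarith : (0:ℝ) ≤ 2*δ₀)
          linarith
        have h6 : t₀ - T (i+1) ≤ 2*δ₀ := le_trans hstep2 hbnd2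
        linarith
      refine ⟨?_, hstep2, ?_⟩
      · rw [hTsucc]; linarith
      · have hstep := hstar (T (i+1)) (T i) hTip_pos
          (by rw [hTsucc]; linarith) (le_trans h1 ht₀1)
        rw [show T i - T (i+1) = D (F (T i)) by rw [hTsucc]; ring] at hstep
        have hveq : (2*Ce / D (F (T i)))^q * F (T i)^(q/p) = d * F (T i) := by
          have e1 : 2*Ce / D (F (T i)) = 2^((1:ℝ)-β) * (F (T i))^(-(1/n)) := by
            rw [hD, Real.rpow_neg hFi.le, Real.rpow_sub two_pos, Real.rpow_one]
            have hvn : (0:ℝ) < (F (T i))^(1/n) := Real.rpow_pos_of_pos hFi _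
            field_simp
          rw [e1, Real.mul_rpow (by positivity) (by positivity),
            ← Real.rpow_mul (by norm_num : (0:ℝ) ≤ 2),
            ← Real.rpow_mul hFi.le, mul_assoc,
            ← Real.rpow_add hFi, hid1, hid2, Real.rpow_one, hd_def]
        calc F (T (i+1)) ≤ (2*Ce / D (F (T i)))^q * F (T i)^(q/p) := hstep
          _ = d * F (T i) := hveq
          _ ≤ d * (d^i * F t₀) := mul_le_mul_of_nonneg_left h3 hd0.le
          _ = d^(i+1) * F t₀ := by rw [pow_succ]; ring
  have hhalfpos : (0:ℝ) < t₀ / 2 := by linarith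
  have hfin : ∀ i, F (t₀/2) ≤ d^i * F t₀ := by
    intro i
    obtain ⟨h1, h2, h3⟩ := hInd i
    have hhalf : (0:ℝ) < (1/2:ℝ)^i := by positivity
    have hbnd : 2*δ₀*(1 - (1/2:ℝ)^i) ≤ 2*δ₀ := by
      have h5 := mul_le_mul_of_nonneg_left
        (by linarith : (1:ℝ) - (1/2:ℝ)^i ≤ 1) (by linarith : (0:ℝ) ≤ 2*δ₀)
      linarith
    have hTi_lb : t₀/2 ≤ T i := by linarith
    exact le_trans (Fmono _ _ hhalfpos hTi_lb) h3
  obtain ⟨i, hi⟩ := exists_pow_lt_of_lt_one (div_pos (Fpos _ hhalfpos) hF0) hd1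
  have hlt : d^i * F t₀ < F (t₀/2) := (lt_div_iff₀ hF0).mp hi
  linarith [hfin i]

/-- Quantitative version of the main theorem: under the Hajłasz–Sobolev embedding
with constant `C_e`, for every `x` and `0 < r ≤ 1` one has
`μ(B(x,r)) ≥ C r^{pα/(α-1)}` with `α = q/p` and
`1/C = 2^{pα²/(α-1)² + 3pα/(α-1)} · C_e^{pα/(α-1)}`. -/
theorem sobolev_embedding_implies_measure_lower_bound_explicit
    {X : Type*} [MetricSpace X] [MeasurableSpace X] [BorelSpace X]
    (μ : Measure X)
    (hopen : ∀ U : Set X, IsOpen U → U.Nonempty → 0 < μ U)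
    (hbounded : ∀ s : Set X, Bornology.IsBounded s → μ s < ∞)
    (p q : ℝ) (hp : 1 ≤ p) (hpq : p < q)
    (Ce : ℝ) (hCe : 0 < Ce)
    (hembed : ∀ u g : X → ℝ, AEMeasurable u μ → AEMeasurable g μ → (∀ y, 0 ≤ g y) →
      (∀ᵐ y ∂μ, ∀ᵐ z ∂μ, |u y - u z| ≤ dist y z * (g y + g z)) →
      (∫⁻ y, ENNReal.ofReal |u y| ^ q ∂μ) ^ (1 / q) ≤
        ENNReal.ofReal Ce *
          ((∫⁻ y, ENNReal.ofReal |u y| ^ p ∂μ) ^ (1 / p) +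
            (∫⁻ y, ENNReal.ofReal (g y) ^ p ∂μ) ^ (1 / p))) :
    ∀ x : X, ∀ r : ℝ, 0 < r → r ≤ 1 →
      letI α : ℝ := q / p
      ENNReal.ofReal
          ((2 ^ (p * α ^ 2 / (α - 1) ^ 2 + 3 * p * α / (α - 1)) *
              Ce ^ (p * α / (α - 1)))⁻¹ *
            r ^ (p * α / (α - 1))) ≤
        μ (ball x r) := by
  intro x r hr hr1
  show ENNReal.ofReal
      ((2 ^ (p * (q/p) ^ 2 / ((q/p) - 1) ^ 2 + 3 * p * (q/p) / ((q/p) - 1)) *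
          Ce ^ (p * (q/p) / ((q/p) - 1)))⁻¹ *
        r ^ (p * (q/p) / ((q/p) - 1))) ≤ μ (ball x r)
  have hp0 : (0:ℝ) < p := lt_of_lt_of_le one_pos hp
  have hq0 : (0:ℝ) < q := hp0.trans hpq
  have hqp : (0:ℝ) < q - p := by linarith
  set F : ℝ → ℝ := fun t => (μ (ball x t)).toReal with hF
  have hfin : ∀ t : ℝ, μ (ball x t) ≠ ∞ := fun t => (hbounded _ isBounded_ball).ne
  have Fpos : ∀ t : ℝ, 0 < t → 0 < F t := by
    intro t ht
    have h := hopen (ball x t) isOpen_ball ⟨x, mem_ball_self ht⟩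
    exact ENNReal.toReal_pos h.ne' (hfin t)
  have Fmono : ∀ s t : ℝ, 0 < s → s ≤ t → F s ≤ F t := fun s t hs hst =>
    ENNReal.toReal_mono (hfin t) (measure_mono (ball_subset_ball hst))
  have hstar : ∀ s t : ℝ, 0 < s → s < t → t ≤ 1 →
      F s ≤ (2 * Ce / (t - s)) ^ q * (F t) ^ (q / p) := fun s t hs hst ht =>
    star_real μ hbounded p q hp hpq Ce hCe hembed x s t hs hst ht
  have hE := lemE p q Ce hp hpq hCe F Fpos Fmono hstar r hr hr1
  set n : ℝ := p * q / (q - p) with hn_def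
  have hn : 0 < n := by positivity
  have hα1 : (q/p) - 1 = (q-p)/p := by field_simp
  have hid1 : p * (q/p) / ((q/p) - 1) = n := by
    rw [hα1, hn_def]; field_simp
  have hid3 : 3 * p * (q/p) / ((q/p) - 1) = 3 * n := by
    rw [hα1, hn_def]; field_simp
  have hid2 : p * (q/p) ^ 2 / ((q/p) - 1) ^ 2 = n * (n / p) := by
    rw [hα1, hn_def]; field_simp
  rw [hid1, hid2, hid3]
  have h2np : (0:ℝ) < 2 ^ (n/p) := Real.rpow_pos_of_pos two_pos _
  have hApos : (0:ℝ) < 2 ^ (n/p) * 4 * Ce := by positivity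
  have hAn : ((2:ℝ) ^ (n/p) * 4 * Ce) ^ n ≤ 2 ^ (n * (n/p) + 3 * n) * Ce ^ n := by
    have e1 : ((2:ℝ) ^ (n/p) * 4 * Ce) ^ n
        = ((2:ℝ) ^ (n/p)) ^ n * (4:ℝ) ^ n * Ce ^ n := by
      rw [Real.mul_rpow (by positivity) hCe.le, Real.mul_rpow (by positivity) (by norm_num)]
    have e2 : ((2:ℝ) ^ (n/p)) ^ n = (2:ℝ) ^ (n * (n/p)) := by
      rw [← Real.rpow_mul (by norm_num : (0:ℝ) ≤ 2)]
      ring_nf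
    have e3 : (4:ℝ) ^ n ≤ (2:ℝ) ^ (3 * n) := by
      have e4 : (4:ℝ) ^ n = (2:ℝ) ^ (2 * n) := by
        rw [show (4:ℝ) = (2:ℝ) ^ (2:ℝ) by
              rw [show (2:ℝ) = ((2:ℕ):ℝ) by norm_num, Real.rpow_natCast]; norm_num,
            ← Real.rpow_mul (by norm_num : (0:ℝ) ≤ 2)]
      rw [e4]
      apply Real.rpow_le_rpow_of_exponent_le one_le_two
      linarith
    calc ((2:ℝ) ^ (n/p) * 4 * Ce) ^ n = ((2:ℝ) ^ (n/p)) ^ n * (4:ℝ) ^ n * Ce ^ n := e1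
      _ ≤ (2:ℝ) ^ (n * (n/p)) * (2:ℝ) ^ (3 * n) * Ce ^ n := by
          rw [e2]
          apply mul_le_mul_of_nonneg_right _ (Real.rpow_nonneg hCe.le n)
          exact mul_le_mul_of_nonneg_left e3 (Real.rpow_pos_of_pos two_pos _).le
      _ = 2 ^ (n * (n/p) + 3 * n) * Ce ^ n := by
          rw [← Real.rpow_add two_pos]
  have hreal : ((2:ℝ) ^ (n * (n/p) + 3 * n) * Ce ^ n)⁻¹ * r ^ n ≤ F r := by
    refine le_trans ?_ hE
    rw [Real.div_rpow hr.le hApos.le]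
    rw [← div_eq_inv_mul]
    apply div_le_div_of_nonneg_left (Real.rpow_nonneg hr.le n) (Real.rpow_pos_of_pos hApos n) hAn
  calc ENNReal.ofReal (((2:ℝ) ^ (n * (n/p) + 3 * n) * Ce ^ n)⁻¹ * r ^ n)
      ≤ ENNReal.ofReal (F r) := ENNReal.ofReal_le_ofReal hreal
    _ = μ (ball x r) := ENNReal.ofReal_toReal (hfin r)
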